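/- The R-transform R_μ(γ) = K_μ(γ) - 1/γ, where K_μ is the functional inverse of the Hilbert transform H_μ, is strictly increasing on its domain I' = (H_min, H_max) \ {0}. -/

import Mathlib

open MeasureTheory Set Filter

set_option linter.unusedSectionVars false
set_option linter.unusedVariables false

section Helpers

variable {μ : Measure ℝ} [IsProbabilityMeasure μ] {lmin lmax : ℝ}

lemma mem_ae (hsupp : μ (Set.Icc lmin lmax)ᶜ = 0) : ∀ᵐ l ∂μ, l ∈ Set.Icc lmin lmax := by
  refine measure_mono_null (fun l hl => ?_) hsupp
  exact hl

lemma res_bound {z : ℝ} (hz : z ∉ Set.Icc lmin lmax) :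
    ∃ C : ℝ, ∀ l ∈ Set.Icc lmin lmax, |(z - l)⁻¹| ≤ C := by
  rcases not_and_or.mp ((Set.mem_Icc).not.mp hz) with h | h
  · push_neg at h
    refine ⟨(lmin - z)⁻¹, fun l hl => ?_⟩
    have h1 : 0 < lmin - z := by linarith
    have h2 : lmin - z ≤ l - z := by linarith [hl.1]
    have h3 : |z - l| = l - z := by rw [abs_sub_comm]; exact abs_of_nonneg (by linarith)
    rw [abs_inv, h3]
    exact inv_anti₀ h1 h2
  · push_neg at h
    refine ⟨(z - lmax)⁻¹, fun l hl => ?_⟩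
    have h1 : 0 < z - lmax := by linarith
    have h2 : z - lmax ≤ z - l := by linarith [hl.2]
    rw [abs_inv, abs_of_nonneg (by linarith : (0:ℝ) ≤ z - l)]
    exact inv_anti₀ h1 h2

lemma int_res (hsupp : μ (Set.Icc lmin lmax)ᶜ = 0) {z : ℝ} (hz : z ∉ Set.Icc lmin lmax) :
    Integrable (fun l => (z - l)⁻¹) μ := by
  obtain ⟨C, hC⟩ := res_bound hz
  refine Integrable.mono' (integrable_const C)
    ((measurable_const.sub measurable_id).inv.aestronglyMeasurable) ?_
  filter_upwards [mem_ae hsupp] with l hl using hC l hl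

lemma int_res2 (hsupp : μ (Set.Icc lmin lmax)ᶜ = 0) {a b : ℝ} (ha : a ∉ Set.Icc lmin lmax)
    (hb : b ∉ Set.Icc lmin lmax) :
    Integrable (fun l => (a - l)⁻¹ * (b - l)⁻¹) μ := by
  obtain ⟨C, hC⟩ := res_bound ha
  obtain ⟨D, hD⟩ := res_bound hb
  refine Integrable.mono' (integrable_const (C * D))
    (((measurable_const.sub measurable_id).inv.mul
      (measurable_const.sub measurable_id).inv).aestronglyMeasurable) ?_
  filter_upwards [mem_ae hsupp] with l hl
  rw [Real.norm_eq_abs, abs_mul]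
  exact mul_le_mul (hC l hl) (hD l hl) (abs_nonneg _)
    (le_trans (abs_nonneg _) (hC l hl))

lemma H_pos (hsupp : μ (Set.Icc lmin lmax)ᶜ = 0) (hll : lmin ≤ lmax) {z : ℝ} (hz : lmax < z) :
    0 < ∫ l, (z - l)⁻¹ ∂μ := by
  have hz' : z ∉ Set.Icc lmin lmax := fun h => absurd h.2 (not_le.mpr hz)
  have h1 : 0 < (z - lmin)⁻¹ := inv_pos.mpr (by linarith)
  calc (0:ℝ) < (z - lmin)⁻¹ := h1
    _ = ∫ _, (z - lmin)⁻¹ ∂μ := by simp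
    _ ≤ ∫ l, (z - l)⁻¹ ∂μ := by
        refine integral_mono_ae (integrable_const _) (int_res hsupp hz') ?_
        filter_upwards [mem_ae hsupp] with l hl
        exact inv_anti₀ (by linarith [hl.2]) (by linarith [hl.1])

lemma H_neg (hsupp : μ (Set.Icc lmin lmax)ᶜ = 0) (hll : lmin ≤ lmax) {z : ℝ} (hz : z < lmin) :
    ∫ l, (z - l)⁻¹ ∂μ < 0 := by
  have hz' : z ∉ Set.Icc lmin lmax := fun h => absurd h.1 (not_le.mpr hz)
  have h1 : (z - lmax)⁻¹ < 0 := inv_lt_zero.mpr (by linarith)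
  calc ∫ l, (z - l)⁻¹ ∂μ ≤ ∫ _, (z - lmax)⁻¹ ∂μ := by
        refine integral_mono_ae (int_res hsupp hz') (integrable_const _) ?_
        filter_upwards [mem_ae hsupp] with l hl
        have hzl : z - l < 0 := by linarith [hl.1]
        have h2 : z - lmax ≤ z - l := by linarith [hl.2]
        have hzm : z - lmax < 0 := by linarith
        rw [inv_le_inv_of_neg hzl hzm] <;> try exact h2
    _ = (z - lmax)⁻¹ := by simp
    _ < 0 := h1


-- strict monotonicity of l ↦ (a-l)⁻¹ on Icc when a outside
lemma res_strictMono {lmin lmax a : ℝ} (ha : a ∉ Set.Icc lmin lmax)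
    {x y : ℝ} (hx : x ∈ Set.Icc lmin lmax) (hy : y ∈ Set.Icc lmin lmax) (hxy : x < y) :
    (a - x)⁻¹ < (a - y)⁻¹ := by
  have hprod : 0 < (a - x) * (a - y) := by
    rcases not_and_or.mp ((Set.mem_Icc).not.mp ha) with h | h <;> push_neg at h
    · exact mul_pos_of_neg_of_neg (by linarith [hx.1]) (by linarith [hy.1])
    · exact mul_pos (by linarith [hx.2]) (by linarith [hy.2])
  have hxne : a - x ≠ 0 := fun h => by rw [h, zero_mul] at hprod; exact lt_irrefl _ hprod
  have hyne : a - y ≠ 0 := fun h => by rw [h, mul_zero] at hprod; exact lt_irrefl _ hprod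
  have key : (a - x)⁻¹ - (a - y)⁻¹ = (x - y) / ((a - x) * (a - y)) := by
    field_simp
    ring
  have : (a - x)⁻¹ - (a - y)⁻¹ < 0 := key ▸ div_neg_of_neg_of_pos (by linarith) hprod
  linarith

lemma eq_dirac_of_compl_singleton {μ : Measure ℝ} [IsProbabilityMeasure μ] {x : ℝ}
    (hx : μ ({x}ᶜ) = 0) : μ = Measure.dirac x := by
  have hx1 : μ {x} = 1 := (prob_compl_eq_zero_iff (measurableSet_singleton x)).mp hx
  refine Measure.ext fun s hs => ?_
  rw [Measure.dirac_apply' x hs]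
  by_cases hxs : x ∈ s
  · rw [Set.indicator_of_mem hxs]
    refine le_antisymm prob_le_one ?_
    calc (1 : ENNReal) = μ {x} := hx1.symm
      _ ≤ μ s := measure_mono (Set.singleton_subset_iff.mpr hxs)
  · rw [Set.indicator_of_notMem hxs]
    refine measure_mono_null (fun l hl => ?_) hx
    simp only [Set.mem_compl_iff, Set.mem_singleton_iff]
    intro hlx
    exact hxs (hlx ▸ hl)

-- off-diagonal has positive product measure
lemma offdiag_pos {μ : Measure ℝ} [IsProbabilityMeasure μ] (hnd : ∀ e : ℝ, μ ≠ Measure.dirac e) :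
    0 < (μ.prod μ) {p : ℝ × ℝ | p.1 ≠ p.2} := by
  rw [pos_iff_ne_zero]
  intro h0
  have hms : MeasurableSet {p : ℝ × ℝ | p.1 = p.2} :=
    (isClosed_eq continuous_fst continuous_snd).measurableSet
  rw [show {p : ℝ × ℝ | p.1 ≠ p.2} = {p : ℝ × ℝ | p.1 = p.2}ᶜ from rfl,
    Measure.prod_apply hms.compl] at h0
  have hmeas : Measurable fun x => μ (Prod.mk x ⁻¹' {p : ℝ × ℝ | p.1 = p.2}ᶜ) :=
    measurable_measure_prodMk_left hms.compl
  rw [lintegral_eq_zero_iff hmeas] at h0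
  have : ∃ x : ℝ, μ (Prod.mk x ⁻¹' {p : ℝ × ℝ | p.1 = p.2}ᶜ) = 0 := h0.exists
  obtain ⟨x, hx⟩ := this
  have hpre : (Prod.mk x ⁻¹' {p : ℝ × ℝ | p.1 = p.2}ᶜ) = {x}ᶜ := by
    ext y; simp [eq_comm]
  rw [hpre] at hx
  exact hnd x (eq_dirac_of_compl_singleton hx)


lemma cov_pos (hsupp : μ (Set.Icc lmin lmax)ᶜ = 0) (hnd : ∀ e : ℝ, μ ≠ Measure.dirac e)
    {a b : ℝ} (ha : a ∉ Set.Icc lmin lmax) (hb : b ∉ Set.Icc lmin lmax) :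
    (∫ l, (a - l)⁻¹ ∂μ) * (∫ l, (b - l)⁻¹ ∂μ) < ∫ l, (a - l)⁻¹ * (b - l)⁻¹ ∂μ := by
  set u : ℝ → ℝ := fun l => (a - l)⁻¹ with hu_def
  set v : ℝ → ℝ := fun l => (b - l)⁻¹ with hv_def
  set γ₁ := ∫ l, u l ∂μ
  set γ₂ := ∫ l, v l ∂μ
  set c := ∫ l, u l * v l ∂μ
  have hu : Integrable u μ := int_res hsupp ha
  have hv : Integrable v μ := int_res hsupp hb
  have huv : Integrable (fun l => u l * v l) μ := int_res2 hsupp ha hb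
  set G := μ.prod μ with hG
  set F : ℝ × ℝ → ℝ := fun p => (u p.1 - u p.2) * (v p.1 - v p.2) with hF_def
  have hFmeas : Measurable F := by
    have hum : Measurable u := (measurable_const.sub measurable_id).inv
    have hvm : Measurable v := (measurable_const.sub measurable_id).inv
    exact ((hum.comp measurable_fst).sub (hum.comp measurable_snd)).mul
      ((hvm.comp measurable_fst).sub (hvm.comp measurable_snd))
  have hnull : G (((Set.Icc lmin lmax)ᶜ ×ˢ (Set.univ : Set ℝ))
      ∪ ((Set.univ : Set ℝ) ×ˢ (Set.Icc lmin lmax)ᶜ)) = 0 := by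
    refine measure_union_null ?_ ?_
    · rw [hG, Measure.prod_prod, hsupp, zero_mul]
    · rw [hG, Measure.prod_prod, hsupp, mul_zero]
  have haeG : ∀ᵐ p ∂G, p.1 ∈ Set.Icc lmin lmax ∧ p.2 ∈ Set.Icc lmin lmax := by
    rw [ae_iff]
    refine measure_mono_null (fun p hp => ?_) hnull
    simp only [Set.mem_setOf_eq, not_and_or] at hp
    simp only [Set.mem_union, Set.mem_prod, Set.mem_univ, Set.mem_compl_iff, and_true, true_and]
    tauto
  have hFint : Integrable F G := by
    obtain ⟨C, hC⟩ := res_bound (lmin := lmin) (lmax := lmax) ha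
    obtain ⟨D, hD⟩ := res_bound (lmin := lmin) (lmax := lmax) hb
    refine Integrable.mono' (integrable_const ((C + C) * (D + D)))
      hFmeas.aestronglyMeasurable ?_
    filter_upwards [haeG] with p hp
    rw [Real.norm_eq_abs, hF_def, abs_mul]
    have h1 : |u p.1 - u p.2| ≤ C + C :=
      (abs_sub _ _).trans (add_le_add (hC _ hp.1) (hC _ hp.2))
    have h2 : |v p.1 - v p.2| ≤ D + D :=
      (abs_sub _ _).trans (add_le_add (hD _ hp.1) (hD _ hp.2))
    exact mul_le_mul h1 h2 (abs_nonneg _) (le_trans (abs_nonneg _) h1)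
  -- value of the double integral
  have hval : ∫ p, F p ∂G = 2 * (c - γ₁ * γ₂) := by
    rw [hG, integral_prod _ hFint]
    have inner : ∀ x : ℝ, ∫ y, F (x, y) ∂μ
        = u x * v x + c - (u x * γ₂ + v x * γ₁) := by
      intro x
      have h1 : Integrable (fun y => u x * v y) μ := hv.const_mul _
      have h2 : Integrable (fun y => v x * u y) μ := hu.const_mul _
      have h3 : Integrable (fun y => u x * v x + u y * v y) μ := by
        exact (integrable_const _).add huv
      have h4 : Integrable (fun y => u x * v y + v x * u y) μ := by
        exact h1.add h2
      have e : (fun y => F (x, y))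
          = fun y => (u x * v x + u y * v y) - (u x * v y + v x * u y) := by
        funext y; simp only [hF_def]; ring
      rw [e, integral_sub h3 h4,
        integral_add (integrable_const _) huv, integral_add h1 h2,
        integral_const, integral_const_mul, integral_const_mul]
      simp only [measure_univ, probReal_univ, ENNReal.toReal_one, one_smul]
      rfl
    have e2 : (fun x => ∫ y, F (x, y) ∂μ)
        = fun x => (u x * v x + c) - (u x * γ₂ + v x * γ₁) := by
      funext x; rw [inner x]
    have h3 : Integrable (fun x => u x * v x + c) μ := by
      exact huv.add (integrable_const _)
    have h4 : Integrable (fun x => u x * γ₂ + v x * γ₁) μ := by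
      exact (hu.mul_const _).add (hv.mul_const _)
    rw [e2, integral_sub h3 h4,
      integral_add huv (integrable_const _), integral_add (hu.mul_const _) (hv.mul_const _),
      integral_const, integral_mul_const, integral_mul_const]
    simp only [measure_univ, probReal_univ, ENNReal.toReal_one, one_smul]
    ring
  -- nonnegativity a.e.
  have hnonneg : 0 ≤ᵐ[G] F := by
    filter_upwards [haeG] with p hp
    rcases lt_trichotomy p.1 p.2 with h | h | h
    · have h1 := res_strictMono ha hp.1 hp.2 h
      have h2 := res_strictMono hb hp.1 hp.2 h
      exact le_of_lt (mul_pos_of_neg_of_neg (by simpa [hF_def] using sub_neg.mpr h1)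
        (sub_neg.mpr h2))
    · simp [hF_def, h]
    · have h1 := res_strictMono ha hp.2 hp.1 h
      have h2 := res_strictMono hb hp.2 hp.1 h
      exact le_of_lt (mul_pos (sub_pos.mpr h1) (sub_pos.mpr h2))
  -- strict positivity
  have hpos : 0 < ∫ p, F p ∂G := by
    rw [integral_pos_iff_support_of_nonneg_ae hnonneg hFint]
    have hsub : ((Set.Icc lmin lmax ×ˢ Set.Icc lmin lmax) ∩ {p : ℝ × ℝ | p.1 ≠ p.2})
        ⊆ Function.support F := by
      rintro ⟨x, y⟩ ⟨⟨hx, hy⟩, hne⟩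
      simp only [Function.mem_support, hF_def]
      rcases lt_or_gt_of_ne hne with h | h
      · exact ne_of_lt (mul_pos_of_neg_of_neg (sub_neg.mpr (res_strictMono ha hx hy h))
          (sub_neg.mpr (res_strictMono hb hx hy h))) |>.symm
      · exact ne_of_gt (mul_pos (sub_pos.mpr (res_strictMono ha hy hx h))
          (sub_pos.mpr (res_strictMono hb hy hx h)))
    refine lt_of_lt_of_le ?_ (measure_mono hsub)
    -- G (S×S ∩ {≠}) ≥ G {≠} - G((S×S)ᶜ) = G {≠} > 0
    have hcompl : G ((Set.Icc lmin lmax ×ˢ Set.Icc lmin lmax)ᶜ) = 0 := by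
      refine measure_mono_null (fun p hp => ?_) hnull
      simp only [Set.mem_compl_iff, Set.mem_prod, not_and_or] at hp
      simp only [Set.mem_union, Set.mem_prod, Set.mem_univ, Set.mem_compl_iff, and_true, true_and]
      tauto
    have hge : G {p : ℝ × ℝ | p.1 ≠ p.2}
        ≤ G ((Set.Icc lmin lmax ×ˢ Set.Icc lmin lmax) ∩ {p : ℝ × ℝ | p.1 ≠ p.2})
          + G ((Set.Icc lmin lmax ×ˢ Set.Icc lmin lmax)ᶜ) := by
      refine le_trans (measure_mono fun p hp => ?_) (measure_union_le _ _)
      by_cases hmem : p ∈ Set.Icc lmin lmax ×ˢ Set.Icc lmin lmax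
      · exact Or.inl ⟨hmem, hp⟩
      · exact Or.inr hmem
    rw [hcompl, add_zero] at hge
    exact lt_of_lt_of_le (offdiag_pos hnd) hge
  -- conclude
  have : 0 < 2 * (c - γ₁ * γ₂) := hval ▸ hpos
  linarith

end Helpers

lemma alg_key {γ₁ γ₂ a b c : ℝ} (h12 : γ₁ < γ₂) (h1 : γ₁ ≠ 0) (h2 : γ₂ ≠ 0)
    (hid : γ₁ - γ₂ = (b - a) * c) (hcov : γ₁ * γ₂ < c)
    (hmix : γ₁ < 0 → 0 < γ₂ → a < b) : a - γ₁⁻¹ < b - γ₂⁻¹ := by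
  have e1 : γ₁ * γ₁⁻¹ = 1 := mul_inv_cancel₀ h1
  have e2 : γ₂ * γ₂⁻¹ = 1 := mul_inv_cancel₀ h2
  have h5 : γ₂⁻¹ - γ₁⁻¹ = ((b - a) * c) * (γ₁⁻¹ * γ₂⁻¹) := by
    rw [← hid]
    linear_combination (-γ₂⁻¹) * e1 + γ₁⁻¹ * e2
  have hij1 : (γ₁ * γ₂) * (γ₁⁻¹ * γ₂⁻¹) = 1 := by field_simp
  have hexp : (b - γ₂⁻¹) - (a - γ₁⁻¹) = (b - a) * (1 - c * (γ₁⁻¹ * γ₂⁻¹)) := by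
    linear_combination (-1 : ℝ) * h5
  have main : 0 < (b - a) * (1 - c * (γ₁⁻¹ * γ₂⁻¹)) := by
    rcases lt_or_gt_of_ne h1 with hn1 | hp1
    · rcases lt_or_gt_of_ne h2 with hn2 | hp2
      · -- both negative
        have hpp : 0 < γ₁ * γ₂ := mul_pos_of_neg_of_neg hn1 hn2
        have hijpos : 0 < γ₁⁻¹ * γ₂⁻¹ := by nlinarith
        have hc : 0 < c := hpp.trans hcov
        have hcij : 1 < c * (γ₁⁻¹ * γ₂⁻¹) := by nlinarith
        have ht : b - a < 0 := by nlinarith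
        exact mul_pos_of_neg_of_neg ht (by linarith)
      · -- mixed
        have hijneg : γ₁⁻¹ * γ₂⁻¹ < 0 :=
          mul_neg_of_neg_of_pos (inv_lt_zero.mpr hn1) (inv_pos.mpr hp2)
        have hcij : c * (γ₁⁻¹ * γ₂⁻¹) < 1 := by nlinarith
        exact mul_pos (sub_pos.mpr (hmix hn1 hp2)) (by linarith)
    · -- both positive
      have hp2 : 0 < γ₂ := hp1.trans h12
      have hpp : 0 < γ₁ * γ₂ := mul_pos hp1 hp2
      have hijpos : 0 < γ₁⁻¹ * γ₂⁻¹ := by nlinarith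
      have hc : 0 < c := hpp.trans hcov
      have hcij : 1 < c * (γ₁⁻¹ * γ₂⁻¹) := by nlinarith
      have ht : b - a < 0 := by nlinarith
      exact mul_pos_of_neg_of_neg ht (by linarith)
  linarith [hexp, main]


/-- The R-transform `R_μ(γ) = K_μ(γ) - 1/γ`, where `K_μ` is the functional
inverse of the Hilbert transform `H_μ(z) = ∫ 1/(z-λ) dμ(λ)`, is strictly
increasing on its domain `I' = (H_min, H_max) \ {0}`.  Here `μ` is a compactly
supported probability measure (not a Dirac mass) with support contained in
`[λmin, λmax]`, `H_min` and `H_max` are the (possibly infinite) one-sided limits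
of `H_μ` at `λmin` and `λmax`, and `K_μ` is encoded by the hypothesis that for
every `γ ∈ I'`, `K γ` lies outside `[λmin, λmax]` and `H_μ(K γ) = γ`. -/
theorem R_transform_strictMono
    (μ : Measure ℝ) [IsProbabilityMeasure μ] (lmin lmax : ℝ) (hll : lmin ≤ lmax)
    (hsupp : μ (Set.Icc lmin lmax)ᶜ = 0)
    (hnd : ∀ e : ℝ, μ ≠ Measure.dirac e)
    (Hmin Hmax : EReal)
    (hHmin : Tendsto (fun z : ℝ => ((∫ l, (z - l)⁻¹ ∂μ : ℝ) : EReal))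
      (nhdsWithin lmin (Set.Iio lmin)) (nhds Hmin))
    (hHmax : Tendsto (fun z : ℝ => ((∫ l, (z - l)⁻¹ ∂μ : ℝ) : EReal))
      (nhdsWithin lmax (Set.Ioi lmax)) (nhds Hmax))
    (K : ℝ → ℝ)
    (hK : ∀ γ ∈ {γ : ℝ | Hmin < (γ : EReal) ∧ (γ : EReal) < Hmax ∧ γ ≠ 0},
      K γ ∉ Set.Icc lmin lmax ∧ ∫ l, (K γ - l)⁻¹ ∂μ = γ) :
    StrictMonoOn (fun γ : ℝ => K γ - γ⁻¹)
      {γ : ℝ | Hmin < (γ : EReal) ∧ (γ : EReal) < Hmax ∧ γ ≠ 0} := by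
  intro γ₁ hγ₁ γ₂ hγ₂ h12
  obtain ⟨ha, hHa⟩ := hK γ₁ hγ₁
  obtain ⟨hb, hHb⟩ := hK γ₂ hγ₂
  have hn1 : γ₁ ≠ 0 := hγ₁.2.2
  have hn2 : γ₂ ≠ 0 := hγ₂.2.2
  set a := K γ₁ with ha_def
  set b := K γ₂ with hb_def
  -- key resolvent identity
  have hid : γ₁ - γ₂ = (b - a) * (∫ l, (a - l)⁻¹ * (b - l)⁻¹ ∂μ) := by
    rw [← hHa, ← hHb, ← integral_sub (int_res hsupp ha) (int_res hsupp hb),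
      ← integral_const_mul]
    refine integral_congr_ae ?_
    filter_upwards [mem_ae hsupp] with l hl
    have h1 : a - l ≠ 0 := sub_ne_zero.mpr fun h => ha (h ▸ hl)
    have h2 : b - l ≠ 0 := sub_ne_zero.mpr fun h => hb (h ▸ hl)
    field_simp
    ring
  have hcov : γ₁ * γ₂ < ∫ l, (a - l)⁻¹ * (b - l)⁻¹ ∂μ := by
    rw [← hHa, ← hHb]
    exact cov_pos hsupp hnd ha hb
  have hmix : γ₁ < 0 → 0 < γ₂ → a < b := by
    intro hg1 hg2
    have hal : a < lmin := by
      rcases not_and_or.mp ((Set.mem_Icc).not.mp ha) with h | h <;> push_neg at h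
      · exact h
      · exact absurd (hHa ▸ H_pos hsupp hll h) (by linarith)
    have hbl : lmax < b := by
      rcases not_and_or.mp ((Set.mem_Icc).not.mp hb) with h | h <;> push_neg at h
      · exact absurd (hHb ▸ H_neg hsupp hll h) (by linarith)
      · exact h
    linarith
  exact alg_key h12 hn1 hn2 hid hcov hmix
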